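/- For every positive integer e, the first-row entries of R_n^e are a_{1,j}^{(e)} = C(n-1, j-1) * F_{e-1}^{n-j} * F_e^{j-1} for 1 ≤ j ≤ n, where 0^0 is interpreted as 1. -/

import Mathlib

/-- `R n` is the `n × n` integer matrix whose 1-based `(i,j)` entry is `C(i-1, n-j)`. -/
def Rmat (n : ℕ) : Matrix (Fin n) (Fin n) ℤ :=
  Matrix.of fun i j => (Nat.choose i.1 (n - 1 - j.1) : ℤ)

lemma sum_key (p m : ℕ) (hm : m ≤ p) (x y : ℤ) :
    ∑ k ∈ Finset.range (p + 1),
        (Nat.choose p k : ℤ) * (Nat.choose k m : ℤ) * x ^ (p - k) * y ^ k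
      = (Nat.choose p m : ℤ) * y ^ m * (x + y) ^ (p - m) := by
  have h1 : ∑ k ∈ Finset.range (p + 1),
      (Nat.choose p k : ℤ) * (Nat.choose k m : ℤ) * x ^ (p - k) * y ^ k
    = ∑ k ∈ Finset.Ico m (p + 1),
      (Nat.choose p k : ℤ) * (Nat.choose k m : ℤ) * x ^ (p - k) * y ^ k := by
    rw [Finset.range_eq_Ico]
    refine (Finset.sum_subset (Finset.Ico_subset_Ico (Nat.zero_le m) le_rfl) ?_).symm
    intro k hk hk2
    simp only [Finset.mem_Ico] at hk hk2
    have : k < m := by omega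
    rw [Nat.choose_eq_zero_of_lt this]
    push_cast; ring
  rw [h1, Finset.sum_Ico_eq_sum_range]
  have h2 : ∀ t ∈ Finset.range (p + 1 - m),
      (Nat.choose p (m + t) : ℤ) * (Nat.choose (m + t) m : ℤ) * x ^ (p - (m + t)) * y ^ (m + t)
      = (Nat.choose p m : ℤ) * y ^ m *
          ((Nat.choose (p - m) t : ℤ) * y ^ t * x ^ (p - m - t)) := by
    intro t ht
    simp only [Finset.mem_range] at ht
    have hkn : m + t ≤ p := by omega
    have := Nat.choose_mul (n := p) (Nat.le_add_right m t)
    have h3 : (Nat.choose p (m + t) : ℤ) * (Nat.choose (m + t) m : ℤ)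
        = (Nat.choose p m : ℤ) * (Nat.choose (p - m) (m + t - m) : ℤ) := by
      exact_mod_cast congrArg (Nat.cast : ℕ → ℤ) this
    rw [h3]
    have : m + t - m = t := by omega
    rw [this, pow_add]
    have : p - (m + t) = p - m - t := by omega
    rw [this]; ring
  rw [Finset.sum_congr rfl h2, ← Finset.mul_sum]
  have hrange : p + 1 - m = (p - m) + 1 := by omega
  rw [hrange]
  congr 1
  rw [add_comm x y, add_pow]
  exact (Finset.sum_congr rfl fun t _ => by ring).symm

lemma Rmat_first_row_aux (n : ℕ) (hn : 1 ≤ n) :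
    ∀ e, 1 ≤ e → ∀ j : Fin n,
      (Rmat n ^ e) ⟨0, by omega⟩ j =
        (Nat.choose (n - 1) j.1 : ℤ) * (Nat.fib (e - 1) : ℤ) ^ (n - 1 - j.1)
          * (Nat.fib e : ℤ) ^ j.1 := by
  intro e he
  induction e, he using Nat.le_induction with
  | base =>
    intro j
    rw [pow_one]
    simp only [Rmat, Matrix.of_apply, Nat.fib_one]
    have hj : j.1 ≤ n - 1 := by omega
    rcases Nat.eq_or_lt_of_le hj with h | h
    · have : n - 1 - j.1 = 0 := by omega
      rw [this, ← h]
      simp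
    · have h0 : 0 < n - 1 - j.1 := by omega
      rw [Nat.choose_eq_zero_of_lt (by omega : (0:ℕ) < n - 1 - j.1)]
      simp [Nat.fib_zero, zero_pow (by omega : n - 1 - j.1 ≠ 0)]
  | succ e he ih =>
    intro j
    rw [pow_succ, Matrix.mul_apply]
    have hterm : ∀ k : Fin n,
        (Rmat n ^ e) ⟨0, by omega⟩ k * Rmat n k j
        = (Nat.choose (n - 1) k.1 : ℤ) * (Nat.choose k.1 (n - 1 - j.1) : ℤ)
            * (Nat.fib (e - 1) : ℤ) ^ (n - 1 - k.1) * (Nat.fib e : ℤ) ^ k.1 := by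
      intro k
      rw [ih k]
      simp only [Rmat, Matrix.of_apply]
      ring
    rw [Finset.sum_congr rfl fun k _ => hterm k]
    rw [Finset.sum_fin_eq_sum_range]
    have hsum : ∑ k ∈ Finset.range n,
        (if h : k < n then
          (Nat.choose (n - 1) (⟨k, h⟩ : Fin n).1 : ℤ) *
            (Nat.choose (⟨k, h⟩ : Fin n).1 (n - 1 - j.1) : ℤ)
            * (Nat.fib (e - 1) : ℤ) ^ (n - 1 - (⟨k, h⟩ : Fin n).1)
            * (Nat.fib e : ℤ) ^ (⟨k, h⟩ : Fin n).1
         else 0)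
        = ∑ k ∈ Finset.range ((n - 1) + 1),
            (Nat.choose (n - 1) k : ℤ) * (Nat.choose k (n - 1 - j.1) : ℤ)
              * (Nat.fib (e - 1) : ℤ) ^ (n - 1 - k) * (Nat.fib e : ℤ) ^ k := by
      have : (n - 1) + 1 = n := by omega
      rw [this]
      refine Finset.sum_congr rfl fun k hk => ?_
      rw [dif_pos (Finset.mem_range.mp hk)]
    rw [hsum, sum_key (n - 1) (n - 1 - j.1) (by omega) _ _]
    have hfib : (Nat.fib (e - 1) : ℤ) + (Nat.fib e : ℤ) = (Nat.fib (e + 1) : ℤ) := by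
      have : e - 1 + 2 = e + 1 := by omega
      have h2 : Nat.fib (e - 1) + Nat.fib (e - 1 + 1) = Nat.fib (e - 1 + 2) := by
        rw [Nat.fib_add_two]
      have h3 : e - 1 + 1 = e := by omega
      rw [h3, this] at h2
      exact_mod_cast congrArg (Nat.cast : ℕ → ℤ) h2
    rw [hfib]
    have hsymm : Nat.choose (n - 1) (n - 1 - j.1) = Nat.choose (n - 1) j.1 :=
      Nat.choose_symm (by omega)
    rw [hsymm]
    have h1 : n - 1 - (n - 1 - j.1) = j.1 := by omega
    rw [h1]
    have h2 : e + 1 - 1 = e := by omega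
    rw [h2]

/-- First-row entries of `R_n ^ e`: `a_{1,j} = C(n-1, j-1) F_{e-1}^{n-j} F_e^{j-1}`
for `1 ≤ j ≤ n` (1-based indexing, with `0^0 = 1`). -/
theorem Rmat_pow_first_row (n : ℕ) (hn : 1 ≤ n) (e : ℕ) (he : 0 < e) (j : ℕ)
    (hj1 : 1 ≤ j) (hjn : j ≤ n) :
    (Rmat n ^ e) ⟨0, by omega⟩ ⟨j - 1, by omega⟩ =
      (Nat.choose (n - 1) (j - 1) : ℤ) * (Nat.fib (e - 1) : ℤ) ^ (n - j)
        * (Nat.fib e : ℤ) ^ (j - 1) := by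
  have := Rmat_first_row_aux n hn e he ⟨j - 1, by omega⟩
  simpa [show n - 1 - (j - 1) = n - j by omega] using this
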